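/- Let A, B : I^n → I be semicopulas with A ≤ B and fix an integer k with 1 ≤ k ≤ n. Then the following are equivalent: (i) there exists a k-increasing semicopula C : I^n → I such that A ≤ C ≤ B; (ii) L_k^{(A,B)}(DU) ≥ 0 for all DU ∈ R_k(I^n). -/

import Mathlib

open scoped Classical BigOperators

namespace KIncr

/-- Points of the ambient space `ℝ^n`. -/
abbrev Pt (n : ℕ) := Fin n → ℝ

/-- Membership in the unit cube `I^n = [0,1]^n`. -/
def inCube {n : ℕ} (x : Pt n) : Prop := ∀ i, x i ∈ Set.Icc (0:ℝ) 1

/-- The unit cube as a set. -/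
def cubeSet (n : ℕ) : Set (Pt n) := {x | inCube x}

/-- Vertices of the unit cube `I^n`. -/
def isCubeVertex {n : ℕ} (x : Pt n) : Prop := ∀ i, x i = 0 ∨ x i = 1

/-- A (formal) box, given by its lower-left and upper-right corners. -/
structure Box (n : ℕ) where
  lo : Pt n
  hi : Pt n

/-- `R` is a `k`-box in `I^n`: exactly `k` coordinates are nondegenerate. -/
def Box.IsKBox {n : ℕ} (k : ℕ) (R : Box n) : Prop :=
  inCube R.lo ∧ inCube R.hi ∧ (∀ i, R.lo i ≤ R.hi i) ∧
    (Finset.univ.filter (fun i => R.lo i < R.hi i)).card = k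

/-- `v` is a vertex of the box `R`. -/
def Box.IsVertex {n : ℕ} (R : Box n) (v : Pt n) : Prop :=
  ∀ i, v i = R.lo i ∨ v i = R.hi i

/-- The (finite) set of vertices of a box. -/
noncomputable def Box.vertices {n : ℕ} (R : Box n) : Finset (Pt n) :=
  Finset.image (fun ε : Fin n → Bool => fun i => if ε i then R.hi i else R.lo i)
    Finset.univ

/-- The sign `(-1)^(m-(n-k))` of a vertex `v` of a `k`-box, where
`m = #{i : v i = lo i}`;  since `m ≥ n - k`, this equals `(-1)^(m+(n-k))`. -/
noncomputable def Box.sign {n : ℕ} (k : ℕ) (R : Box n) (v : Pt n) : ℤ :=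
  (-1) ^ ((Finset.univ.filter (fun i => v i = R.lo i)).card + (n - k))

/-- The multiplicity `m_R(u)` of a point `u` with respect to a `k`-box `R`. -/
noncomputable def Box.mult {n : ℕ} (k : ℕ) (R : Box n) (u : Pt n) : ℤ :=
  if R.IsVertex u then R.sign k u else 0

/-- `V_{A,k}(R) = ∑_{v ∈ ver R} sign_R(v) · A(v)`. -/
noncomputable def Vvol {n : ℕ} (k : ℕ) (A : Pt n → ℝ) (R : Box n) : ℝ :=
  ∑ v ∈ R.vertices, (R.sign k v : ℝ) * A v

/-- A function is `k`-increasing on `D` if `V_{A,k}(R) ≥ 0` for every `k`-box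
with all vertices in `D`. -/
def KIncreasingOn {n : ℕ} (k : ℕ) (D : Set (Pt n)) (A : Pt n → ℝ) : Prop :=
  ∀ R : Box n, R.IsKBox k → (∀ v ∈ R.vertices, v ∈ D) → 0 ≤ Vvol k A R

/-- The multiplicity `m_DU(u)` of a point with respect to a formal (multiset)
disjoint union of `k`-boxes. -/
noncomputable def multDU {n : ℕ} (k : ℕ) (DU : Multiset (Box n)) (u : Pt n) : ℤ :=
  (DU.map (fun R => R.mult k u)).sum

/-- `DU ∈ R_k(D)`: every box of the multiset `DU` is a `k`-box with all its
vertices in `D`. -/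
def memRk {n : ℕ} (k : ℕ) (D : Set (Pt n)) (DU : Multiset (Box n)) : Prop :=
  ∀ R ∈ DU, R.IsKBox k ∧ ∀ v ∈ R.vertices, v ∈ D

/-- `L_k^{(A,B)}(DU) = ∑_{m_DU(u)>0} m_DU(u)·B(u) + ∑_{m_DU(u)<0} m_DU(u)·A(u)`. -/
noncomputable def Lk {n : ℕ} (k : ℕ) (A B : Pt n → ℝ) (DU : Multiset (Box n)) : ℝ :=
  ∑ u ∈ DU.toFinset.biUnion Box.vertices,
    (if 0 < multDU k DU u then (multDU k DU u : ℝ) * B u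
     else if multDU k DU u < 0 then (multDU k DU u : ℝ) * A u else 0)

/-- `P⁻_{k,D}^{(A,B)}(x)`, with the Mathlib convention `sInf ∅ = 0`. -/
noncomputable def Pneg {n : ℕ} (k : ℕ) (D : Set (Pt n)) (A B : Pt n → ℝ) (x : Pt n) : ℝ :=
  sInf {r : ℝ | ∃ DU : Multiset (Box n), memRk k D DU ∧ multDU k DU x < 0 ∧
    r = Lk k A B DU / |(multDU k DU x : ℝ)|}

/-- `P⁺_{k,D}^{(A,B)}(x)`, with the Mathlib convention `sInf ∅ = 0`. -/
noncomputable def Ppos {n : ℕ} (k : ℕ) (D : Set (Pt n)) (A B : Pt n → ℝ) (x : Pt n) : ℝ :=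
  sInf {r : ℝ | ∃ DU : Multiset (Box n), memRk k D DU ∧ 0 < multDU k DU x ∧
    r = Lk k A B DU / |(multDU k DU x : ℝ)|}

/-- `γ_{k,D}^{(A,B)}(x) = min {P⁻_{k,D}^{(A,B)}(x), B(x) - A(x)}`. -/
noncomputable def gammaK {n : ℕ} (k : ℕ) (D : Set (Pt n)) (A B : Pt n → ℝ) (x : Pt n) : ℝ :=
  min (Pneg k D A B x) (B x - A x)

/-- `δ_{k,D}^{(A,B)}(x) = min {P⁺_{k,D}^{(A,B)}(x), B(x) - A(x)}`. -/
noncomputable def deltaK {n : ℕ} (k : ℕ) (D : Set (Pt n)) (A B : Pt n → ℝ) (x : Pt n) : ℝ :=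
  min (Ppos k D A B x) (B x - A x)

/-- A dense countably infinite mesh `D = ∏ δᵢ` in `I^n`. -/
def IsMesh {n : ℕ} (D : Set (Pt n)) : Prop :=
  ∃ δ : Fin n → Set ℝ,
    (∀ i, δ i ⊆ Set.Icc (0:ℝ) 1 ∧ (δ i).Countable ∧ (δ i).Infinite ∧
      Set.Icc (0:ℝ) 1 ⊆ closure (δ i) ∧ (0:ℝ) ∈ δ i ∧ (1:ℝ) ∈ δ i) ∧
    D = {x : Pt n | ∀ i, x i ∈ δ i}

/-- `A` is grounded: it vanishes whenever some coordinate is `0`. -/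
def Grounded {n : ℕ} (A : Pt n → ℝ) : Prop :=
  ∀ x : Pt n, inCube x → (∃ i, x i = 0) → A x = 0

/-- `A` is 1-increasing (increasing in each variable). -/
def OneIncreasing {n : ℕ} (A : Pt n → ℝ) : Prop :=
  ∀ x y : Pt n, inCube x → inCube y → (∀ i, x i ≤ y i) → A x ≤ A y

/-- `A` has uniform marginals. -/
def UniformMarginals {n : ℕ} (A : Pt n → ℝ) : Prop :=
  ∀ i : Fin n, ∀ t ∈ Set.Icc (0:ℝ) 1, A (Function.update (fun _ => (1:ℝ)) i t) = t

/-- `A` is a standardized function. -/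
def Standardized {n : ℕ} (A : Pt n → ℝ) : Prop :=
  Grounded A ∧ OneIncreasing A ∧ A (fun _ => (1:ℝ)) = 1

/-- `A` is a semicopula. -/
def Semicopula {n : ℕ} (A : Pt n → ℝ) : Prop :=
  Grounded A ∧ OneIncreasing A ∧ UniformMarginals A

/-- `A` maps the unit cube into `I = [0,1]`. -/
def MapsToI {n : ℕ} (A : Pt n → ℝ) : Prop :=
  ∀ x : Pt n, inCube x → A x ∈ Set.Icc (0:ℝ) 1

/-- Condition S: all discontinuities of all sections of `A` lie in the
countable set `S`. -/
def CondS {n : ℕ} (A : Pt n → ℝ) (S : Set ℝ) : Prop :=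
  ∀ u : Pt n, inCube u → ∀ i : Fin n, ∀ t ∈ Set.Icc (0:ℝ) 1, t ∉ S →
    ContinuousWithinAt (fun s => A (Function.update u i s)) (Set.Icc (0:ℝ) 1) t

/-- A quasi-copula: a semicopula that is 1-Lipschitz w.r.t. the ℓ¹-norm. -/
def QuasiCopula {n : ℕ} (A : Pt n → ℝ) : Prop :=
  Semicopula A ∧ ∀ x y : Pt n, inCube x → inCube y → |A x - A y| ≤ ∑ i, |x i - y i|

end KIncr
namespace KIncr
open Finset

variable {n k : ℕ}

lemma mem_vertices_iff {R : Box n} {v : Pt n} : v ∈ R.vertices ↔ R.IsVertex v := by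
  classical
  constructor
  · intro hv
    rw [Box.vertices, Finset.mem_image] at hv
    obtain ⟨ε, -, rfl⟩ := hv
    intro i
    by_cases h : ε i <;> simp [h]
  · intro hv
    rw [Box.vertices, Finset.mem_image]
    refine ⟨fun i => decide (v i = R.hi i), Finset.mem_univ _, ?_⟩
    funext i
    rcases hv i with h | h
    · by_cases h2 : v i = R.hi i <;> simp [h2, h.symm]
    · simp [h]
  
lemma vertex_inCube {R : Box n} (hR : R.IsKBox k) {v : Pt n} (hv : v ∈ R.vertices) :
    inCube v := by
  intro i
  rcases mem_vertices_iff.1 hv i with h | h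
  · rw [h]; exact hR.1 i
  · rw [h]; exact hR.2.1 i

lemma mult_eq_zero_of_not_mem {R : Box n} {u : Pt n} (h : u ∉ R.vertices) :
    R.mult k u = 0 := by
  rw [Box.mult, if_neg (fun hv => h (mem_vertices_iff.2 hv))]

/-- helper: equal parities give equal powers of -1 -/
lemma neg_one_pow_par (a b : ℕ) (h : a % 2 = b % 2) : ((-1 : ℤ)) ^ a = (-1) ^ b := by
  rw [neg_one_pow_eq_pow_mod_two, h, ← neg_one_pow_eq_pow_mod_two]

end KIncr
namespace KIncr
open Finset

variable {n k : ℕ}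

/-- the vertex of `R` determined by the set `E` of "high" coordinates -/
noncomputable def vE (R : Box n) (E : Finset (Fin n)) : Pt n :=
  fun j => if j ∈ E then R.hi j else R.lo j

lemma vertices_eq_powerset_image (R : Box n) (hle : ∀ i, R.lo i ≤ R.hi i) :
    R.vertices = (Finset.univ.filter fun i => R.lo i < R.hi i).powerset.image (vE R) := by
  classical
  set S := Finset.univ.filter fun i => R.lo i < R.hi i with hS
  ext v
  rw [Box.vertices, Finset.mem_image, Finset.mem_image]
  constructor
  · rintro ⟨ε, -, rfl⟩
    refine ⟨S.filter fun i => ε i, Finset.mem_powerset.2 (Finset.filter_subset _ _), ?_⟩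
    funext j
    by_cases hj : j ∈ S
    · by_cases hε : ε j <;> simp [vE, hj, hε]
    · have : R.lo j = R.hi j := le_antisymm (hle j)
        (not_lt.1 (by simpa [hS] using hj))
      by_cases hε : ε j <;> by_cases hj2 : j ∈ S.filter fun i => ε i <;>
        simp [vE, hε, hj2, this]
  · rintro ⟨E, -, rfl⟩
    exact ⟨fun i => decide (i ∈ E), Finset.mem_univ _, by funext j; by_cases h : j ∈ E <;>
      simp [vE, h]⟩

lemma vE_inj (R : Box n) {E₁ E₂ : Finset (Fin n)}
    (h₁ : E₁ ⊆ Finset.univ.filter fun i => R.lo i < R.hi i)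
    (h₂ : E₂ ⊆ Finset.univ.filter fun i => R.lo i < R.hi i)
    (hEq : vE R E₁ = vE R E₂) : E₁ = E₂ := by
  classical
  ext j
  constructor
  · intro hj
    by_contra hj2
    have h := congrFun hEq j
    simp only [vE, if_pos hj, if_neg hj2] at h
    exact absurd h (ne_of_lt (Finset.mem_filter.1 (h₁ hj)).2).symm
  · intro hj
    by_contra hj2
    have h := congrFun hEq j
    simp only [vE, if_pos hj, if_neg hj2] at h
    exact absurd h (ne_of_lt (Finset.mem_filter.1 (h₂ hj)).2)

lemma sign_vE (R : Box n) (hle : ∀ i, R.lo i ≤ R.hi i)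
    (hcard : (Finset.univ.filter fun i => R.lo i < R.hi i).card = k) (hkn : k ≤ n)
    {E : Finset (Fin n)} (hE : E ⊆ Finset.univ.filter fun i => R.lo i < R.hi i) :
    R.sign k (vE R E) = (-1) ^ (k + E.card) := by
  classical
  have hfil : (Finset.univ.filter fun i => vE R E i = R.lo i) = Eᶜ := by
    ext i
    simp only [Finset.mem_filter, Finset.mem_univ, true_and, Finset.mem_compl]
    by_cases hi : i ∈ E
    · have : R.lo i < R.hi i := (Finset.mem_filter.1 (hE hi)).2
      simp [vE, hi, this.ne']
    · simp [vE, hi]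
  have hEcard : E.card ≤ k := hcard ▸ Finset.card_le_card hE
  rw [Box.sign, hfil, Finset.card_compl, Fintype.card_fin]
  exact neg_one_pow_par _ _ (by omega)

lemma vvol_powerset (R : Box n) (hle : ∀ i, R.lo i ≤ R.hi i)
    (hcard : (Finset.univ.filter fun i => R.lo i < R.hi i).card = k) (hkn : k ≤ n)
    (C : Pt n → ℝ) :
    Vvol k C R = ∑ E ∈ (Finset.univ.filter fun i => R.lo i < R.hi i).powerset,
      ((-1 : ℝ)) ^ (k + E.card) * C (vE R E) := by
  classical
  rw [Vvol, vertices_eq_powerset_image R hle, Finset.sum_image (fun E₁ h₁ E₂ h₂ h =>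
    vE_inj R (Finset.mem_powerset.1 h₁) (Finset.mem_powerset.1 h₂) h)]
  refine Finset.sum_congr rfl fun E hE => ?_
  rw [sign_vE R hle hcard hkn (Finset.mem_powerset.1 hE)]
  push_cast
  ring
end KIncr
namespace KIncr
open Finset

variable {n k : ℕ}

lemma sum_mult_eq_vvol {R : Box n} {F : Finset (Pt n)} (hsub : R.vertices ⊆ F)
    (C : Pt n → ℝ) :
    ∑ z ∈ F, (R.mult k z : ℝ) * C z = Vvol k C R := by
  classical
  rw [Vvol, ← Finset.sum_subset hsub (fun z _ hz => by
    rw [mult_eq_zero_of_not_mem hz]; simp)]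
  refine Finset.sum_congr rfl fun z hz => ?_
  rw [Box.mult, if_pos (mem_vertices_iff.1 hz)]

lemma multiset_sum_swap {α : Type*} (DU : Multiset α) (F : Finset (Pt n))
    (f : α → Pt n → ℝ) :
    ∑ z ∈ F, (DU.map fun R => f R z).sum = (DU.map fun R => ∑ z ∈ F, f R z).sum := by
  classical
  induction DU using Multiset.induction_on with
  | empty => simp
  | cons a s ih => simp [Multiset.map_cons, Multiset.sum_cons, Finset.sum_add_distrib, ih]

/-- Forward direction of stmt4. -/
lemma forward_dir (k : ℕ) (A B C : Pt n → ℝ)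
    (hACB : ∀ x : Pt n, inCube x → A x ≤ C x ∧ C x ≤ B x)
    (hC : KIncreasingOn k (cubeSet n) C)
    (DU : Multiset (Box n)) (hDU : memRk k (cubeSet n) DU) :
    0 ≤ Lk k A B DU := by
  classical
  set V := DU.toFinset.biUnion Box.vertices with hV
  have key : ∀ z ∈ V, (multDU k DU z : ℝ) * C z ≤
      (if 0 < multDU k DU z then (multDU k DU z : ℝ) * B z
       else if multDU k DU z < 0 then (multDU k DU z : ℝ) * A z else 0) := by
    intro z hz
    obtain ⟨R, hR, hzR⟩ := Finset.mem_biUnion.1 hz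
    have hcube : inCube z := vertex_inCube (hDU R (Multiset.mem_toFinset.1 hR)).1 hzR
    rcases lt_trichotomy (multDU k DU z) 0 with h | h | h
    · rw [if_neg (by omega), if_pos h]
      exact mul_le_mul_of_nonpos_left (hACB z hcube).1 (by exact_mod_cast h.le)
    · simp [h]
    · rw [if_pos h]
      exact mul_le_mul_of_nonneg_left (hACB z hcube).2 (by exact_mod_cast h.le)
  calc (0:ℝ) ≤ ∑ z ∈ V, (multDU k DU z : ℝ) * C z := by
        have : ∀ z, (multDU k DU z : ℝ) * C z
            = (DU.map fun R => (R.mult k z : ℝ) * C z).sum := by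
          intro z
          rw [multDU]
          push_cast
          rw [← Multiset.sum_map_mul_right]
          simp [Multiset.map_map, Function.comp]
        simp only [this]
        rw [multiset_sum_swap]
        refine Multiset.sum_nonneg ?_
        intro x hx
        obtain ⟨R, hR, rfl⟩ := Multiset.mem_map.1 hx
        have hsub : R.vertices ⊆ V := fun v hv =>
          Finset.mem_biUnion.2 ⟨R, Multiset.mem_toFinset.2 hR, hv⟩
        rw [sum_mult_eq_vvol hsub]
        exact hC R (hDU R hR).1 (hDU R hR).2
    _ ≤ Lk k A B DU := Finset.sum_le_sum key

end KIncr
namespace KIncr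
open Finset

variable {n k : ℕ}

lemma step_mono (hk1 : 1 ≤ k) (hkn : k ≤ n) (C : Pt n → ℝ) (hg : Grounded C)
    (hki : ∀ R : Box n, R.IsKBox k → 0 ≤ Vvol k C R)
    (u : Pt n) (hu : inCube u) (i : Fin n) (s t : ℝ)
    (hs : 0 ≤ s) (hst : s ≤ t) (ht : t ≤ 1) :
    C (Function.update u i s) ≤ C (Function.update u i t) := by
  classical
  have hcs : inCube (Function.update u i s) := by
    intro j; rcases eq_or_ne j i with rfl | hj
    · simp [Set.mem_Icc, hs, hst.trans ht]
    · simpa [Function.update_of_ne hj] using hu j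
  have hct : inCube (Function.update u i t) := by
    intro j; rcases eq_or_ne j i with rfl | hj
    · simpa using Set.mem_Icc.2 ⟨hs.trans hst, ht⟩
    · simpa [Function.update_of_ne hj] using hu j
  by_cases hzero : ∃ j, j ≠ i ∧ u j = 0
  · obtain ⟨j, hji, hj0⟩ := hzero
    rw [hg _ hcs ⟨j, by simp [Function.update_of_ne hji, hj0]⟩,
        hg _ hct ⟨j, by simp [Function.update_of_ne hji, hj0]⟩]
  push_neg at hzero
  have hpos : ∀ j, j ≠ i → 0 < u j := fun j hj =>
    lt_of_le_of_ne (hu j).1 (Ne.symm (hzero j hj))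
  rcases eq_or_lt_of_le hst with rfl | hst'
  · exact le_refl _
  -- pick k-1 auxiliary coordinates
  obtain ⟨T, hTsub, hTcard⟩ : ∃ T ⊆ Finset.univ.erase i, T.card = k - 1 := by
    apply Finset.exists_subset_card_eq
    rw [Finset.card_erase_of_mem (Finset.mem_univ i), Finset.card_univ, Fintype.card_fin]
    omega
  have hiT : i ∉ T := fun h => (Finset.mem_erase.1 (hTsub h)).1 rfl
  set R : Box n := ⟨fun j => if j = i then s else if j ∈ T then 0 else u j,
                    fun j => if j = i then t else u j⟩ with hR
  have hle : ∀ j, R.lo j ≤ R.hi j := by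
    intro j
    rcases eq_or_ne j i with rfl | hj
    · simpa [hR] using hst
    · by_cases hjT : j ∈ T <;> simp [hR, hj, hjT, (hu j).1]
  have hSeq : (Finset.univ.filter fun j => R.lo j < R.hi j) = insert i T := by
    ext j
    simp only [Finset.mem_filter, Finset.mem_univ, true_and, Finset.mem_insert]
    rcases eq_or_ne j i with rfl | hj
    · simp [hR, hst']
    · by_cases hjT : j ∈ T
      · simp [hR, hj, hjT, hpos j hj]
      · simp [hR, hj, hjT]
  have hcard : (Finset.univ.filter fun j => R.lo j < R.hi j).card = k := by
    rw [hSeq, Finset.card_insert_of_notMem hiT, hTcard]; omega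
  have hbox : R.IsKBox k := by
    refine ⟨?_, ?_, hle, hcard⟩
    · intro j
      rcases eq_or_ne j i with rfl | hj
      · simpa [hR] using Set.mem_Icc.2 ⟨hs, hst.trans ht⟩
      · by_cases hjT : j ∈ T
        · simpa [hR, hj, hjT] using Set.mem_Icc.2 ⟨le_refl (0:ℝ), zero_le_one⟩
        · simpa [hR, hj, hjT] using hu j
    · intro j
      rcases eq_or_ne j i with rfl | hj
      · simpa [hR] using Set.mem_Icc.2 ⟨hs.trans hst, ht⟩
      · simpa [hR, hj] using hu j
  have hV := hki R hbox
  rw [vvol_powerset R hle hcard hkn C, hSeq] at hV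
  -- split the powerset sum
  have hsplit : ∀ E ∈ (insert i T).powerset, ¬ (T ⊆ E) →
      ((-1 : ℝ)) ^ (k + E.card) * C (vE R E) = 0 := by
    intro E hE hTE
    obtain ⟨j, hjT, hjE⟩ := Finset.not_subset.1 hTE
    have hji : j ≠ i := fun h => hiT (h ▸ hjT)
    have : C (vE R E) = 0 := by
      apply hg _ (vertex_inCube hbox (by
        rw [vertices_eq_powerset_image R hle, hSeq]
        exact Finset.mem_image.2 ⟨E, hE, rfl⟩))
      exact ⟨j, by simp [vE, hjE, hR, hji, hjT]⟩
    rw [this, mul_zero]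
  rw [← Finset.sum_filter_add_sum_filter_not ((insert i T).powerset)
    (fun E => T ⊆ E), Finset.sum_eq_zero (fun E hE =>
      hsplit E (Finset.mem_filter.1 hE).1 (Finset.mem_filter.1 hE).2), add_zero] at hV
  have hfil : ((insert i T).powerset.filter fun E => T ⊆ E) = {T, insert i T} := by
    ext E
    simp only [Finset.mem_filter, Finset.mem_powerset, Finset.mem_insert,
      Finset.mem_singleton]
    constructor
    · rintro ⟨hE1, hE2⟩
      by_cases hiE : i ∈ E
      · right
        refine le_antisymm hE1 (Finset.insert_subset hiE hE2)
      · left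
        refine le_antisymm (fun j hj => ?_) hE2
        rcases Finset.mem_insert.1 (hE1 hj) with rfl | h
        · exact absurd hj hiE
        · exact h
    · rintro (rfl | rfl)
      · exact ⟨Finset.subset_insert _ _, le_refl _⟩
      · exact ⟨le_refl _, Finset.subset_insert _ _⟩
  rw [hfil, Finset.sum_pair (by
    intro h
    exact hiT (h ▸ Finset.mem_insert_self i T))] at hV
  have hvT : vE R T = Function.update u i s := by
    funext j
    rcases eq_or_ne j i with rfl | hj
    · simp [vE, hiT, hR]
    · by_cases hjT : j ∈ T <;> simp [vE, hjT, hR, hj, Function.update_of_ne hj]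
  have hvS : vE R (insert i T) = Function.update u i t := by
    funext j
    rcases eq_or_ne j i with rfl | hj
    · simp [vE, hR]
    · by_cases hjT : j ∈ T <;>
        simp [vE, hjT, hR, hj, Function.update_of_ne hj]
  have hsign1 : ((-1 : ℝ)) ^ (k + T.card) = -1 := by
    rw [hTcard]
    exact Odd.neg_one_pow ⟨k - 1, by omega⟩
  have hsign2 : ((-1 : ℝ)) ^ (k + (insert i T).card) = 1 := by
    rw [Finset.card_insert_of_notMem hiT, hTcard]
    exact Even.neg_one_pow ⟨k, by omega⟩
  rw [hvT, hvS, hsign1, hsign2] at hV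
  linarith

end KIncr
namespace KIncr
open Finset

variable {n k : ℕ}

lemma oneIncreasing_of_kincr (hk1 : 1 ≤ k) (hkn : k ≤ n) (C : Pt n → ℝ)
    (hg : Grounded C) (hki : ∀ R : Box n, R.IsKBox k → 0 ≤ Vvol k C R) :
    OneIncreasing C := by
  classical
  intro x y hx hy hxy
  set z : ℕ → Pt n := fun m i => if (i : ℕ) < m then y i else x i with hz
  have hzc : ∀ m, inCube (z m) := by
    intro m i
    by_cases h : (i : ℕ) < m <;> simp only [hz, h, if_pos, if_neg, if_true, if_false]
    · exact hy i
    · exact hx i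
  have hstep : ∀ m, m < n → C (z m) ≤ C (z (m + 1)) := by
    intro m hm
    set i : Fin n := ⟨m, hm⟩ with hi
    have h1 : z m = Function.update (z m) i (x i) := by
      funext j
      rcases eq_or_ne j i with rfl | hj
      · simp [hz, hi]
      · rw [Function.update_of_ne hj]
    have h2 : z (m + 1) = Function.update (z m) i (y i) := by
      funext j
      rcases eq_or_ne j i with rfl | hj
      · simp [hz, hi]
      · rw [Function.update_of_ne hj]
        have : (j : ℕ) < m + 1 ↔ (j : ℕ) < m := by
          have : (j : ℕ) ≠ m := fun h => hj (Fin.ext h)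
          omega
        simp only [hz, this]
    rw [h1, h2]
    exact step_mono hk1 hkn C hg hki (z m) (hzc m) i (x i) (y i)
      (hx i).1 (hxy i) (hy i).2
  have key : ∀ m, m ≤ n → C (z 0) ≤ C (z m) := by
    intro m
    induction m with
    | zero => exact fun _ => le_refl _
    | succ p ih => exact fun h => (ih (by omega)).trans (hstep p (by omega))
  have hz0 : z 0 = x := by funext i; simp [hz]
  have hzn : z n = y := by funext i; simp [hz, i.isLt]
  rw [← hz0, ← hzn]
  exact key n (le_refl n)

end KIncr
namespace KIncr
open Finset

variable {n k : ℕ}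

lemma multDU_finsum {ι : Type*} (s : Finset ι) (M : ι → Multiset (Box n)) (z : Pt n) :
    multDU k (∑ j ∈ s, M j) z = ∑ j ∈ s, multDU k (M j) z := by
  classical
  induction s using Finset.induction_on with
  | empty => simp [multDU]
  | insert x s hx ih =>
      rw [Finset.sum_insert hx, Finset.sum_insert hx, ← ih, multDU, Multiset.map_add,
        Multiset.sum_add, multDU, multDU]

lemma multDU_replicate (c : ℕ) (R : Box n) (z : Pt n) :
    multDU k (Multiset.replicate c R) z = c * R.mult k z := by
  rw [multDU, Multiset.map_replicate, Multiset.sum_replicate, nsmul_eq_mul]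

end KIncr
namespace KIncr
open Finset

variable {n k : ℕ}

/-- lower bound function: `A` inside the cube, `B` outside. -/
noncomputable def lowF (A B : Pt n → ℝ) : Pt n → ℝ :=
  fun z => if inCube z then A z else B z

/-- `Vvol` as a linear map in the function argument. -/
noncomputable def vvolL (k : ℕ) (R : Box n) : (Pt n → ℝ) →ₗ[ℝ] ℝ :=
  ∑ v ∈ R.vertices, (R.sign k v : ℝ) • LinearMap.proj v

lemma vvolL_apply (k : ℕ) (R : Box n) (C : Pt n → ℝ) :
    vvolL k R C = Vvol k C R := by
  simp [vvolL, Vvol, smul_eq_mul]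

lemma finite_feasible (hkn : k ≤ n) (A B : Pt n → ℝ)
    (hAB : ∀ x : Pt n, inCube x → A x ≤ B x)
    (hL : ∀ DU : Multiset (Box n), memRk k (cubeSet n) DU → 0 ≤ Lk k A B DU)
    (u : Finset (Box n)) :
    ∃ C : Pt n → ℝ, (∀ z, C z ∈ Set.Icc (lowF A B z) (B z)) ∧
      ∀ R ∈ u, R.IsKBox k → 0 ≤ Vvol k C R := by
  classical
  set low := lowF A B with hlow
  have hlowB : ∀ z, low z ≤ B z := by
    intro z
    by_cases h : inCube z <;> simp [hlow, lowF, h]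
    exact hAB z h
  set u' := u.filter (fun R => R.IsKBox k) with hu'
  have hu'box : ∀ R ∈ u', R.IsKBox k := fun R hR => (Finset.mem_filter.1 hR).2
  suffices hsuf : ∃ C : Pt n → ℝ, (∀ z, C z ∈ Set.Icc (low z) (B z)) ∧
      ∀ R ∈ u', 0 ≤ Vvol k C R by
    obtain ⟨C, hC1, hC2⟩ := hsuf
    exact ⟨C, hC1, fun R hR hbox => hC2 R (Finset.mem_filter.2 ⟨hR, hbox⟩)⟩
  by_contra hcon
  push_neg at hcon
  -- the compact convex set of admissible functions
  set S0 : Set (Pt n → ℝ) := Set.univ.pi fun z => Set.Icc (low z) (B z) with hS0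
  have hS0mem : ∀ {C : Pt n → ℝ}, C ∈ S0 ↔ ∀ z, C z ∈ Set.Icc (low z) (B z) := by
    intro C
    simp only [hS0, Set.mem_univ_pi]
  have hS0c : IsCompact S0 := isCompact_univ_pi fun z => isCompact_Icc
  have hS0conv : Convex ℝ S0 := convex_pi fun z _ => convex_Icc _ _
  have hBS0 : B ∈ S0 := hS0mem.2 fun z => ⟨hlowB z, le_refl _⟩
  -- the image of S0 under the evaluation of all the box volumes
  set Φ : (Pt n → ℝ) →ₗ[ℝ] ({R // R ∈ u'} → ℝ) :=
    LinearMap.pi (fun j => vvolL k j.1) with hΦ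
  have hΦapp : ∀ (C : Pt n → ℝ) (j : {R // R ∈ u'}), Φ C j = Vvol k C j.1 := by
    intro C j; simp [hΦ, LinearMap.pi_apply, vvolL_apply]
  have hΦcont : Continuous (Φ : (Pt n → ℝ) → ({R // R ∈ u'} → ℝ)) := by
    apply continuous_pi
    intro j
    simp only [hΦapp]
    unfold Vvol
    exact continuous_finset_sum _ fun v _ => continuous_const.mul (continuous_apply v)
  set K : Set ({R // R ∈ u'} → ℝ) := Φ '' S0 with hK
  have hKconv : Convex ℝ K := hS0conv.linear_image Φ
  have hKc : IsCompact K := hS0c.image hΦcont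
  set T : Set ({R // R ∈ u'} → ℝ) := {y | ∀ j, 0 ≤ y j} with hT
  have hTconv : Convex ℝ T := by
    have : T = Set.univ.pi fun _ => Set.Ici (0:ℝ) := by
      ext y
      simp only [hT, Set.mem_univ_pi, Set.mem_setOf_eq, Set.mem_Ici]
    rw [this]
    exact convex_pi fun _ _ => convex_Ici _
  have hTclosed : IsClosed T := by
    have : T = ⋂ j, (fun y => y j) ⁻¹' Set.Ici (0:ℝ) := by
      ext y; simp [hT]
    rw [this]
    exact isClosed_iInter fun j => IsClosed.preimage (continuous_apply j) isClosed_Ici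
  have hdisj : Disjoint K T := by
    rw [Set.disjoint_left]
    rintro y ⟨C, hCS0, rfl⟩ hyT
    obtain ⟨R, hR, hlt⟩ := hcon C (hS0mem.1 hCS0)
    have := hyT ⟨R, hR⟩
    rw [hΦapp] at this
    linarith
  obtain ⟨f, a, b, hfa, hab, hfb⟩ :=
    geometric_hahn_banach_compact_closed hKconv hKc hTconv hTclosed hdisj
  have hb0 : b < 0 := by
    have h0T : (0 : {R // R ∈ u'} → ℝ) ∈ T := fun j => le_refl _
    have := hfb 0 h0T
    simpa using this
  set lam : {R // R ∈ u'} → ℝ := fun j => f (fun j' => if j = j' then 1 else 0) with hlam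
  have hfy : ∀ y : {R // R ∈ u'} → ℝ, f y = ∑ j, y j * lam j := by
    intro y
    conv_lhs => rw [pi_eq_sum_univ y]
    rw [map_sum]
    refine Finset.sum_congr rfl fun j _ => ?_
    rw [map_smul, smul_eq_mul]

  have hlampos : ∀ j, 0 ≤ lam j := by
    intro j
    by_contra hneg
    push_neg at hneg
    set c : ℝ := (b - 1) / lam j with hc
    have hcpos : 0 ≤ c := le_of_lt (div_pos_of_neg_of_neg (by linarith) hneg)
    have hcT : (c • fun j' => if j = j' then (1:ℝ) else 0) ∈ T := by
      intro j'
      simp only [Pi.smul_apply, smul_eq_mul]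
      by_cases h : j = j' <;> simp [h, hcpos]
    have := hfb _ hcT
    have heq : f (fun j' => if j = j' then (1:ℝ) else 0) = lam j := rfl
    rw [map_smul, smul_eq_mul, heq, hc, div_mul_cancel₀ _ (ne_of_lt hneg)] at this
    linarith
  have hneg : ∀ C ∈ S0, ∑ j, Vvol k C j.1 * lam j < 0 := by
    intro C hC
    have := hfa (Φ C) ⟨C, hC, rfl⟩
    rw [hfy] at this
    simp only [hΦapp] at this
    linarith
  -- the support function of the box [low, B] evaluated on combinations of boxes
  set V : Finset (Pt n) := u'.biUnion Box.vertices with hV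
  have hVcube : ∀ z ∈ V, inCube z := by
    intro z hz
    obtain ⟨R, hR, hzR⟩ := Finset.mem_biUnion.1 hz
    exact vertex_inCube (hu'box R hR) hzR
  have hlowV : ∀ z ∈ V, low z = A z := by
    intro z hz
    simp [hlow, lowF, hVcube z hz]
  set μ : ({R // R ∈ u'} → ℝ) → Pt n → ℝ :=
    fun q z => ∑ j, q j * (j.1.mult k z : ℝ) with hμ
  set hfun : ({R // R ∈ u'} → ℝ) → ℝ :=
    fun q => ∑ z ∈ V, max (μ q z * A z) (μ q z * B z) with hhfun
  have hswap : ∀ (q : {R // R ∈ u'} → ℝ) (C : Pt n → ℝ),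
      ∑ j, Vvol k C j.1 * q j = ∑ z ∈ V, μ q z * C z := by
    intro q C
    have hvv : ∀ j : {R // R ∈ u'}, Vvol k C j.1 = ∑ z ∈ V, (j.1.mult k z : ℝ) * C z :=
      fun j => (sum_mult_eq_vvol (fun v hv => Finset.mem_biUnion.2 ⟨j.1, j.2, hv⟩) C).symm
    simp only [hvv, Finset.sum_mul]
    rw [Finset.sum_comm]
    refine Finset.sum_congr rfl fun z _ => ?_
    rw [hμ, Finset.sum_mul]
    exact Finset.sum_congr rfl fun j _ => by ring
  have hhlam : hfun lam < 0 := by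
    set Cs : Pt n → ℝ := fun z => if 0 ≤ μ lam z then B z else low z with hCs
    have hCsS0 : Cs ∈ S0 := hS0mem.2 fun z => by
      by_cases hz : 0 ≤ μ lam z <;> simp [hCs, hz, hlowB z]
    have : hfun lam = ∑ z ∈ V, μ lam z * Cs z := by
      refine Finset.sum_congr rfl fun z hz => ?_
      by_cases hz2 : 0 ≤ μ lam z
      · rw [max_eq_right (mul_le_mul_of_nonneg_left (hAB z (hVcube z hz)) hz2)]
        simp [hCs, hz2]
      · rw [max_eq_left (mul_le_mul_of_nonpos_left (hAB z (hVcube z hz))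
          (le_of_not_ge hz2))]
        simp [hCs, hz2, hlowV z hz]
    rw [this, ← hswap]
    exact hneg Cs hCsS0
  have hcont : Continuous hfun := by
    apply continuous_finset_sum
    intro z _
    have hμc : Continuous fun q : {R // R ∈ u'} → ℝ => μ q z :=
      continuous_finset_sum _ fun j _ => (continuous_apply j).mul continuous_const
    exact Continuous.max (hμc.mul continuous_const) (hμc.mul continuous_const)
  obtain ⟨ε, hε, hball⟩ := Metric.isOpen_iff.1 (isOpen_Iio.preimage hcont) lam
    (by simpa [Set.mem_preimage] using hhlam)
  have hqex : ∀ j, ∃ qq : ℚ, lam j < qq ∧ (qq : ℝ) < lam j + ε :=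
    fun j => exists_rat_btwn (by linarith)
  choose q hq1 hq2 using hqex
  have hq0 : ∀ j, 0 < q j := by
    intro j
    have : (0 : ℝ) < q j := lt_of_le_of_lt (hlampos j) (hq1 j)
    exact_mod_cast this
  have hqball : (fun j => (q j : ℝ)) ∈ Metric.ball lam ε := by
    rw [Metric.mem_ball, dist_pi_lt_iff hε]
    intro j
    rw [Real.dist_eq, abs_lt]
    constructor <;> [linarith [hq1 j, hq2 j]; linarith [hq1 j, hq2 j]]
  have hhq : hfun (fun j => (q j : ℝ)) < 0 := hball hqball
  -- clear denominators
  set N : ℕ := ∏ j, (q j).den with hN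
  have hNpos : 0 < N := Finset.prod_pos fun j _ => (q j).pos
  set c : {R // R ∈ u'} → ℕ := fun j => (q j).num.toNat * (N / (q j).den) with hcdef
  have hc : ∀ j, (c j : ℝ) = (q j : ℝ) * N := by
    intro j
    have hdvd : (q j).den ∣ N := Finset.dvd_prod_of_mem _ (Finset.mem_univ j)
    have hQ : ((c j : ℕ) : ℚ) = (q j) * N := by
      have hnum : (((q j).num.toNat : ℤ) : ℚ) = ((q j).num : ℚ) := by
        exact_mod_cast congrArg (fun z : ℤ => (z : ℚ))
          (Int.toNat_of_nonneg (Rat.num_nonneg.2 (le_of_lt (hq0 j))))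
      have hden : ((q j).den : ℚ) ≠ 0 := by
        exact_mod_cast (q j).den_nz
      have hNden : ((q j).den : ℚ) * ((N / (q j).den : ℕ) : ℚ) = (N : ℚ) := by
        exact_mod_cast congrArg (fun z : ℕ => (z : ℚ)) (Nat.mul_div_cancel' hdvd)
      have h1 : ((c j : ℕ) : ℚ) = ((q j).num : ℚ) * ((N / (q j).den : ℕ) : ℚ) := by
        rw [hcdef]
        push_cast
        rw [← hnum]
        push_cast
        ring
      have h2 : (q j) * (N : ℚ) = ((q j).num : ℚ) * ((N / (q j).den : ℕ) : ℚ) := by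
        rw [← hNden, ← mul_assoc]
        congr 1
        exact Rat.mul_den_eq_num (q j)
      rw [h1, h2]
    calc (c j : ℝ) = (((c j : ℕ) : ℚ) : ℝ) := by push_cast; ring
      _ = (((q j) * N : ℚ) : ℝ) := by rw [hQ]
      _ = (q j : ℝ) * N := by push_cast; ring
  have hcpos : ∀ j, 0 < c j := by
    intro j
    have : (0:ℝ) < (q j : ℝ) * N := by
      have : (0:ℝ) < (q j : ℝ) := by exact_mod_cast hq0 j
      positivity
    rw [← hc j] at this
    exact_mod_cast this
  -- the contradicting multiset
  set DU : Multiset (Box n) := ∑ j : {R // R ∈ u'}, Multiset.replicate (c j) j.1 with hDU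
  have hmemDU : ∀ R ∈ DU, ∃ j : {R // R ∈ u'}, R = j.1 := by
    intro R hR
    obtain ⟨j, -, hj⟩ := Multiset.mem_sum.1 hR
    exact ⟨j, Multiset.eq_of_mem_replicate hj⟩
  have hmemRk : memRk k (cubeSet n) DU := by
    intro R hR
    obtain ⟨j, rfl⟩ := hmemDU R hR
    exact ⟨hu'box _ j.2, fun v hv => vertex_inCube (hu'box _ j.2) hv⟩
  have hmult : ∀ z, multDU k DU z = ∑ j, (c j : ℤ) * j.1.mult k z := by
    intro z
    rw [hDU, multDU_finsum]
    exact Finset.sum_congr rfl fun j _ => multDU_replicate _ _ _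
  have hmultR : ∀ z, ((multDU k DU z : ℤ) : ℝ) = N * μ (fun j => (q j : ℝ)) z := by
    intro z
    rw [hmult z]
    push_cast
    rw [hμ, Finset.mul_sum]
    refine Finset.sum_congr rfl fun j _ => ?_
    rw [hc j]
    ring
  have hLkeq : Lk k A B DU = (N : ℝ) * hfun (fun j => (q j : ℝ)) := by
    rw [Lk]
    have hsub : DU.toFinset.biUnion Box.vertices ⊆ V := by
      intro z hz
      obtain ⟨R, hR, hzR⟩ := Finset.mem_biUnion.1 hz
      obtain ⟨j, rfl⟩ := hmemDU R (Multiset.mem_toFinset.1 hR)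
      exact Finset.mem_biUnion.2 ⟨j.1, j.2, hzR⟩
    rw [Finset.sum_subset hsub (fun z hzV hz => ?_)]
    · rw [hhfun, Finset.mul_sum]
      refine Finset.sum_congr rfl fun z hz => ?_
      have hAB' : A z ≤ B z := hAB z (hVcube z hz)
      rcases lt_trichotomy (multDU k DU z) 0 with hm | hm | hm
      · rw [if_neg (by omega), if_pos hm]
        have hmR : ((multDU k DU z : ℤ) : ℝ) ≤ 0 := by exact_mod_cast hm.le
        rw [← max_eq_left (mul_le_mul_of_nonpos_left hAB' hmR), hmultR z,
          mul_max_of_nonneg _ _ (by positivity : (0:ℝ) ≤ (N:ℝ))]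
        ring_nf
      · rw [if_neg (by omega), if_neg (by omega)]
        have : μ (fun j => (q j : ℝ)) z = 0 := by
          have h0 : ((multDU k DU z : ℤ) : ℝ) = 0 := by rw [hm]; simp
          rw [hmultR z] at h0
          have hN0 : (N : ℝ) ≠ 0 := by positivity
          rcases mul_eq_zero.1 h0 with h | h
          · exact absurd h hN0
          · exact h
        rw [this]
        simp
      · rw [if_pos hm]
        have hmR : (0:ℝ) ≤ ((multDU k DU z : ℤ) : ℝ) := by exact_mod_cast hm.le
        rw [← max_eq_right (mul_le_mul_of_nonneg_left hAB' hmR), hmultR z,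
          mul_max_of_nonneg _ _ (by positivity : (0:ℝ) ≤ (N:ℝ))]
        ring_nf
    · -- terms outside the support vanish
      have hm0 : multDU k DU z = 0 := by
        rw [hmult z]
        refine Finset.sum_eq_zero fun j _ => ?_
        have hzj : z ∉ (j.1).vertices := by
          intro hzj
          apply hz
          refine Finset.mem_biUnion.2 ⟨j.1, ?_, hzj⟩
          rw [Multiset.mem_toFinset, hDU]
          refine Multiset.mem_sum.2 ⟨j, Finset.mem_univ j, ?_⟩
          exact Multiset.mem_replicate.2 ⟨Nat.pos_iff_ne_zero.1 (hcpos j), rfl⟩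
        rw [mult_eq_zero_of_not_mem hzj, mul_zero]
      rw [hm0]
      norm_num
  have hfin := hL DU hmemRk
  rw [hLkeq] at hfin
  have hNR : (0:ℝ) < N := by exact_mod_cast hNpos
  nlinarith [hhq, hNR, hfin]


end KIncr
namespace KIncr
open Finset

variable {n k : ℕ}

lemma exists_global (hkn : k ≤ n) (A B : Pt n → ℝ)
    (hAB : ∀ x : Pt n, inCube x → A x ≤ B x)
    (hL : ∀ DU : Multiset (Box n), memRk k (cubeSet n) DU → 0 ≤ Lk k A B DU) :
    ∃ C : Pt n → ℝ, (∀ z, C z ∈ Set.Icc (lowF A B z) (B z)) ∧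
      ∀ R : Box n, R.IsKBox k → 0 ≤ Vvol k C R := by
  classical
  set S0 : Set (Pt n → ℝ) := Set.univ.pi fun z => Set.Icc (lowF A B z) (B z) with hS0
  have hS0mem : ∀ {C : Pt n → ℝ}, C ∈ S0 ↔ ∀ z, C z ∈ Set.Icc (lowF A B z) (B z) := by
    intro C
    simp only [hS0, Set.mem_univ_pi]
  set t : Box n → Set (Pt n → ℝ) := fun R => {C | R.IsKBox k → 0 ≤ Vvol k C R} with ht
  have htc : ∀ R, IsClosed (t R) := by
    intro R
    by_cases hR : R.IsKBox k
    · have : t R = {C | 0 ≤ Vvol k C R} := by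
        ext C; simp [ht, hR]
      rw [this]
      have hco : Continuous fun C : Pt n → ℝ => Vvol k C R := by
        unfold Vvol
        exact continuous_finset_sum _ fun v _ => continuous_const.mul (continuous_apply v)
      exact isClosed_le continuous_const hco
    · have : t R = Set.univ := by
        ext C; simp [ht, hR]
      rw [this]
      exact isClosed_univ
  have hfin : ∀ u : Finset (Box n), (S0 ∩ ⋂ R ∈ u, t R).Nonempty := by
    intro u
    obtain ⟨C, hC1, hC2⟩ := finite_feasible hkn A B hAB hL u
    exact ⟨C, hS0mem.2 hC1, Set.mem_iInter₂.2 fun R hR => hC2 R hR⟩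
  have hS0c : IsCompact S0 := isCompact_univ_pi fun z => isCompact_Icc
  obtain ⟨C, hCS0, hCt⟩ := hS0c.inter_iInter_nonempty t htc hfin
  exact ⟨C, hS0mem.1 hCS0, fun R hR => (Set.mem_iInter.1 hCt R) hR⟩

end KIncr
open KIncr
/-- Theorem 3.2: avoidance of sure loss for semicopulas. -/
theorem stmt4 (n k : ℕ) (hn : 1 ≤ n) (hk1 : 1 ≤ k) (hkn : k ≤ n)
    (A B : Pt n → ℝ) (hA : Semicopula A) (hB : Semicopula B)
    (hAI : MapsToI A) (hBI : MapsToI B)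
    (hAB : ∀ x : Pt n, inCube x → A x ≤ B x) :
    (∃ C : Pt n → ℝ, MapsToI C ∧ Semicopula C ∧ KIncreasingOn k (cubeSet n) C ∧
        ∀ x : Pt n, inCube x → A x ≤ C x ∧ C x ≤ B x) ↔
    (∀ DU : Multiset (Box n), memRk k (cubeSet n) DU → 0 ≤ Lk k A B DU) := by
  constructor
  · rintro ⟨C, -, -, hCk, hCbnd⟩
    exact forward_dir k A B C hCbnd hCk
  · intro hL
    obtain ⟨C, hC1, hC2⟩ := exists_global hkn A B hAB hL
    have hbnd : ∀ x : Pt n, inCube x → A x ≤ C x ∧ C x ≤ B x := by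
      intro x hx
      have := hC1 x
      rw [Set.mem_Icc] at this
      rw [lowF, if_pos hx] at this
      exact this
    have hgr : Grounded C := by
      intro x hx hx0
      have h1 := (hbnd x hx).1
      have h2 := (hbnd x hx).2
      rw [hA.1 x hx hx0] at h1
      rw [hB.1 x hx hx0] at h2
      linarith
    have hmono : OneIncreasing C := oneIncreasing_of_kincr hk1 hkn C hgr hC2
    have hum : UniformMarginals C := by
      intro i t ht
      have hcube : inCube (Function.update (fun _ => (1:ℝ)) i t) := by
        intro j
        rcases eq_or_ne j i with rfl | hj
        · simpa using ht
        · simp [Function.update_of_ne hj]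
      have h1 := (hbnd _ hcube).1
      have h2 := (hbnd _ hcube).2
      rw [hA.2.2 i t ht] at h1
      rw [hB.2.2 i t ht] at h2
      linarith
    refine ⟨C, ?_, ⟨hgr, hmono, hum⟩, fun R hR _ => hC2 R hR, hbnd⟩
    intro x hx
    have h1 := (hbnd x hx).1
    have h2 := (hbnd x hx).2
    have hA1 := hAI x hx
    have hB1 := hBI x hx
    rw [Set.mem_Icc] at hA1 hB1 ⊢
    exact ⟨le_trans hA1.1 h1, le_trans h2 hB1.2⟩
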